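/- Let u_L, u_R ∈ (-1, 1) with u_L ≠ u_R, and let W_L = 1/√(1-u_L²), W_R = 1/√(1-u_R²). Then the quantity ((W_L+W_R)/2)² + ((u_L+u_R)/2 · (W_L+W_R)/2 - (u_L W_L + u_R W_R)/2) · (W_L - W_R)/(u_L - u_R) equals W_L · W_R, and in particular is strictly positive. -/
import Mathlib

open Real

/-- Positivity of `Q` in the 1D entropy conservative flux: for `u_L ≠ u_R` in `(-1,1)`
with Lorentz factors `W_L, W_R`, the quantity
`⟨W⟩² + (⟨u⟩⟨W⟩ - ⟨uW⟩)·(W_L-W_R)/(u_L-u_R)` equals `W_L W_R > 0`. -/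
theorem Q_eq_WLWR_pos (uL uR : ℝ) (hL : uL ∈ Set.Ioo (-1 : ℝ) 1)
    (hR : uR ∈ Set.Ioo (-1 : ℝ) 1) (hne : uL ≠ uR)
    (WL WR : ℝ) (hWL : WL = 1 / Real.sqrt (1 - uL ^ 2))
    (hWR : WR = 1 / Real.sqrt (1 - uR ^ 2)) :
    ((WL + WR) / 2) ^ 2 +
      ((uL + uR) / 2 * ((WL + WR) / 2) - (uL * WL + uR * WR) / 2) *
        ((WL - WR) / (uL - uR)) = WL * WR ∧
    0 < ((WL + WR) / 2) ^ 2 +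
      ((uL + uR) / 2 * ((WL + WR) / 2) - (uL * WL + uR * WR) / 2) *
        ((WL - WR) / (uL - uR)) := by
  have hd : uL - uR ≠ 0 := sub_ne_zero.mpr hne
  have h1 : (0:ℝ) < 1 - uL ^ 2 := by nlinarith [hL.1, hL.2]
  have h2 : (0:ℝ) < 1 - uR ^ 2 := by nlinarith [hR.1, hR.2]
  have hWLpos : 0 < WL := by rw [hWL]; positivity
  have hWRpos : 0 < WR := by rw [hWR]; positivity
  have heq : ((WL + WR) / 2) ^ 2 +
      ((uL + uR) / 2 * ((WL + WR) / 2) - (uL * WL + uR * WR) / 2) *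
        ((WL - WR) / (uL - uR)) = WL * WR := by
    field_simp
    ring
  exact ⟨heq, heq ▸ mul_pos hWLpos hWRpos⟩
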